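/- Let r be a recognizable string series over Σ given by a d-dimensional linear representation ⟨ι, (M_σ)_{σ∈Σ}, τ⟩ over ℝ with all coordinates of ι and τ nonzero. Then there exists a d-dimensional linear representation ⟨α, (N_σ)_{σ∈Σ}, α⟩ over ℂ with equal initial and final vectors such that αᵀ N_{w₁}⋯N_{w_n} α = ιᵀ M_{w₁}⋯M_{w_n} τ for every word w = w₁⋯w_n ∈ Σ*. -/

import Mathlib

open Matrix

/-- Given a real linear representation `⟨ι, (M_σ), τ⟩` with all coordinates of `ι` and `τ`
nonzero, there is a complex linear representation with equal initial and final vector `α`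
computing the same string series. -/
theorem exists_representation_equal_endpoints (d : ℕ) (S : Type)
    (ι τ : Fin d → ℝ) (M : S → Matrix (Fin d) (Fin d) ℝ)
    (hι : ∀ i, ι i ≠ 0) (hτ : ∀ i, τ i ≠ 0) :
    ∃ (α : Fin d → ℂ) (N : S → Matrix (Fin d) (Fin d) ℂ),
      ∀ w : List S,
        α ⬝ᵥ ((w.map N).prod).mulVec α
          = (fun i => (ι i : ℂ)) ⬝ᵥ
              ((w.map fun σ => (M σ).map (fun x => (x : ℂ))).prod).mulVec
                (fun i => (τ i : ℂ)) := by
  -- choose square roots c i with (c i)^2 = τ i / ι i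
  have hc : ∀ i : Fin d, ∃ c : ℂ, c ^ 2 = (τ i : ℂ) / (ι i : ℂ) := fun i =>
    IsAlgClosed.exists_pow_nat_eq _ (by norm_num : (0:ℕ) < 2)
  choose c hcsq using hc
  have hcne : ∀ i, c i ≠ 0 := by
    intro i h
    have : (τ i : ℂ) / (ι i : ℂ) = 0 := by rw [← hcsq i, h]; ring
    have hιi : (ι i : ℂ) ≠ 0 := by exact_mod_cast hι i
    field_simp at this
    exact hτ i (by simpa using this)
  set D : Matrix (Fin d) (Fin d) ℂ := diagonal c with hD
  set E : Matrix (Fin d) (Fin d) ℂ := diagonal (fun i => (c i)⁻¹) with hE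
  have hED : E * D = 1 := by
    rw [hE, hD, diagonal_mul_diagonal]
    rw [show (fun i => (c i)⁻¹ * c i) = fun _ => (1 : ℂ) from
      funext fun i => inv_mul_cancel₀ (hcne i)]
    exact diagonal_one
  refine ⟨fun i => c i * (ι i : ℂ), fun σ => E * (M σ).map (fun x => (x : ℂ)) * D, ?_⟩
  intro w
  have hprod : (w.map fun σ => E * (M σ).map (fun x => (x : ℂ)) * D).prod
      = E * (w.map fun σ => (M σ).map (fun x => (x : ℂ))).prod * D := by
    induction w with
    | nil => simp only [List.map_nil, List.prod_nil, mul_one, hED]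
    | cons a t ih =>
        simp only [List.map_cons, List.prod_cons, ih]
        rw [show E * (M a).map (fun x => (x : ℂ)) * D *
            (E * (List.map (fun σ => (M σ).map fun x => (x : ℂ)) t).prod * D)
          = E * ((M a).map (fun x => (x : ℂ)) * ((D * E) *
              (List.map (fun σ => (M σ).map fun x => (x : ℂ)) t).prod)) * D by
            noncomm_ring]
        have hDE : D * E = 1 := by
          rw [hD, hE, diagonal_mul_diagonal]
          rw [show (fun i => c i * (c i)⁻¹) = fun _ => (1 : ℂ) from
            funext fun i => mul_inv_cancel₀ (hcne i)]
          exact diagonal_one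
        rw [hDE, one_mul, mul_assoc]
  rw [hprod]
  set P := (w.map fun σ => (M σ).map (fun x => (x : ℂ))).prod with hP
  have hDvec : D.mulVec (fun i => c i * (ι i : ℂ)) = fun i => (τ i : ℂ) := by
    funext i
    rw [hD, mulVec_diagonal]
    have hιi : (ι i : ℂ) ≠ 0 := by exact_mod_cast hι i
    rw [show c i * (c i * (ι i : ℂ)) = c i ^ 2 * (ι i : ℂ) by ring, hcsq i,
      div_mul_cancel₀ _ hιi]
  calc (fun i => c i * (ι i : ℂ)) ⬝ᵥ (E * P * D).mulVec (fun i => c i * (ι i : ℂ))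
      = (fun i => c i * (ι i : ℂ)) ⬝ᵥ E.mulVec (P.mulVec (fun i => (τ i : ℂ))) := by
        rw [← mulVec_mulVec, ← mulVec_mulVec, hDvec]
    _ = (fun i => (ι i : ℂ)) ⬝ᵥ P.mulVec (fun i => (τ i : ℂ)) := by
        simp only [dotProduct, hE, mulVec_diagonal]
        refine Finset.sum_congr rfl fun i _ => ?_
        field_simp [hcne i]
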